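/- arXiv:2503.05137 — 5 statements merged into one kernel-verified Lean document; each statement's English description precedes it below -/
import Mathlib

section
/- Markov chain tree theorem: Let P be an irreducible row-stochastic matrix on a finite set S and let π be a stationary distribution of P. Then the total arborescence weight Σ_{j∈S} |H_P(j)| is strictly positive and, for every i ∈ S, π(i) = |H_P(i)| / Σ_{j∈S} |H_P(j)|. -/
open Filter Topology

/-- A matrix is row-stochastic: nonnegative entries and each row sums to 1. -/
def RowStochastic {S : Type*} [Fintype S] (P : Matrix S S ℝ) : Prop :=
  (∀ i j, 0 ≤ P i j) ∧ ∀ i, ∑ j, P i j = 1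

/-- A probability row vector `π` is a stationary distribution of `P`. -/
def StationaryDist {S : Type*} [Fintype S] (P : Matrix S S ℝ) (π : S → ℝ) : Prop :=
  (∀ i, 0 ≤ π i) ∧ (∑ i, π i = 1) ∧ ∀ j, ∑ i, π i * P i j = π j

/-- Irreducibility: any state leads to any other in some number `k ≥ 1` of steps. -/
def MatIrreducible {S : Type*} [Fintype S] [DecidableEq S] (P : Matrix S S ℝ) : Prop :=
  ∀ i j, ∃ k, 1 ≤ k ∧ 0 < (P ^ k) i j

/-- An arborescence rooted at `root`, encoded as a map `f : S → S` fixing the root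
(so that the partial map on `S \ {root}` is pinned down) such that iterates of `f`
from every state reach the root. -/
def IsArb {S : Type*} (root : S) (f : S → S) : Prop :=
  f root = root ∧ ∀ j, ∃ k, f^[k] j = root

/-- The weight of an arborescence with respect to a matrix `R`:
the product of the weights of its edges `(j, f j)`, `j ≠ root`. -/
def arbWeight {S : Type*} [Fintype S] [DecidableEq S]
    (R : Matrix S S ℝ) (root : S) (f : S → S) : ℝ :=
  ∏ j ∈ Finset.univ.erase root, R j (f j)

open Classical in
/-- `|H_R(root)|`: the total weight of all arborescences rooted at `root`. -/
noncomputable def arbSum {S : Type*} [Fintype S] [DecidableEq S]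
    (R : Matrix S S ℝ) (root : S) : ℝ :=
  ∑ f ∈ Finset.univ.filter (fun f : S → S => IsArb root f), arbWeight R root f


section Aux
variable {S : Type*} [Fintype S] [DecidableEq S]

lemma pow_entry_nonneg {P : Matrix S S ℝ} (hP : RowStochastic P) :
    ∀ k i j, 0 ≤ (P ^ k) i j := by
  intro k
  induction k with
  | zero =>
    intro i j
    rw [pow_zero]
    by_cases h : i = j
    · simp [h, Matrix.one_apply]
    · simp [Matrix.one_apply_ne h]
  | succ k ih =>
    intro i j
    rw [pow_succ, Matrix.mul_apply]
    exact Finset.sum_nonneg fun m _ => mul_nonneg (ih i m) (hP.1 m j)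

lemma arbWeight_nonneg {P : Matrix S S ℝ} (hP : RowStochastic P) (r : S) (f : S → S) :
    0 ≤ arbWeight P r f :=
  Finset.prod_nonneg fun x _ => hP.1 x (f x)

lemma arbSum_nonneg {P : Matrix S S ℝ} (hP : RowStochastic P) (r : S) :
    0 ≤ arbSum P r := by
  rw [arbSum]
  exact Finset.sum_nonneg fun f _ => arbWeight_nonneg hP r f

lemma arbSum_pos {P : Matrix S S ℝ} (hP : RowStochastic P) (hirr : MatIrreducible P)
    (r : S) : 0 < arbSum P r := by
  classical
  have hpos0 : ∀ x : S, ∃ k, 0 < (P ^ k) x r := fun x => by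
    obtain ⟨k, _, hk⟩ := hirr x r; exact ⟨k, hk⟩
  set d : S → ℕ := fun x => Nat.find (hpos0 x) with hd
  have hdr : d r = 0 := by
    rw [hd]
    simp only [Nat.find_eq_zero]
    simp [Matrix.one_apply]
  have step : ∀ x : S, x ≠ r → ∃ m, 0 < P x m ∧ d m < d x := by
    intro x hx
    have hdx : 0 < d x := by
      rcases Nat.eq_zero_or_pos (d x) with h | h
      · exfalso
        have := Nat.find_eq_zero (hpos0 x) |>.mp h
        rw [pow_zero, Matrix.one_apply_ne hx] at this
        exact lt_irrefl 0 this
      · exact h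
    have h1 : 0 < (P ^ d x) x r := Nat.find_spec (hpos0 x)
    have hdx1 : d x = (d x - 1) + 1 := (Nat.succ_pred_eq_of_pos hdx).symm
    rw [hdx1, pow_succ', Matrix.mul_apply] at h1
    have : ∃ m ∈ Finset.univ, (0:ℝ) < P x m * (P ^ (d x - 1)) m r := by
      by_contra hcon
      push_neg at hcon
      have : ∑ m, P x m * (P ^ (d x - 1)) m r ≤ 0 :=
        Finset.sum_nonpos fun m hm => hcon m hm
      linarith
    obtain ⟨m, _, hm⟩ := this
    have hPxm : 0 < P x m := by
      rcases lt_or_eq_of_le (hP.1 x m) with h | h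
      · exact h
      · rw [← h, zero_mul] at hm; exact absurd hm (lt_irrefl 0)
    have hPm : 0 < (P ^ (d x - 1)) m r := by
      rcases lt_or_eq_of_le (pow_entry_nonneg hP (d x - 1) m r) with h | h
      · exact h
      · rw [← h, mul_zero] at hm; exact absurd hm (lt_irrefl 0)
    have hdm : d m ≤ d x - 1 := Nat.find_le hPm
    exact ⟨m, hPxm, lt_of_le_of_lt hdm (by omega)⟩
  set f : S → S := fun x => if hx : x = r then r else Classical.choose (step x hx) with hf
  have hfr : f r = r := by simp [hf]
  have hedge : ∀ x, x ≠ r → 0 < P x (f x) ∧ d (f x) < d x := by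
    intro x hx
    have := Classical.choose_spec (step x hx)
    simpa [hf, dif_neg hx] using this
  have hreach : ∀ x, ∃ k, f^[k] x = r := by
    have key : ∀ n x, d x ≤ n → ∃ k, f^[k] x = r := by
      intro n
      induction n with
      | zero =>
        intro x hx
        by_cases hxr : x = r
        · exact ⟨0, hxr⟩
        · exact absurd (Nat.le_zero.mp hx ▸ (hedge x hxr).2)
            (by have := (hedge x hxr).2; omega)
      | succ n ih =>
        intro x hx
        by_cases hxr : x = r
        · exact ⟨0, hxr⟩
        · have : d (f x) ≤ n := by have := (hedge x hxr).2; omega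
          obtain ⟨k, hk⟩ := ih (f x) this
          exact ⟨k + 1, by rw [Function.iterate_succ_apply, hk]⟩
    exact fun x => key (d x) x le_rfl
  have hArb : IsArb r f := ⟨hfr, hreach⟩
  have hwpos : 0 < arbWeight P r f :=
    Finset.prod_pos fun x hx => (hedge x (Finset.ne_of_mem_erase hx)).1
  rw [arbSum]
  refine Finset.sum_pos' (fun g _ => arbWeight_nonneg hP r g) ⟨f, ?_, hwpos⟩
  simp [hArb]

lemma stat_pow {P : Matrix S S ℝ} {x : S → ℝ}
    (h : ∀ j, ∑ i, x i * P i j = x j) :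
    ∀ k j, ∑ i, x i * (P ^ k) i j = x j := by
  intro k
  induction k with
  | zero =>
    intro j
    simp [Matrix.one_apply, Finset.sum_ite_eq' Finset.univ j x]
  | succ k ih =>
    intro j
    have e1 : ∀ i, x i * (P ^ (k+1)) i j = ∑ m, x i * (P ^ k) i m * P m j := by
      intro i
      rw [pow_succ, Matrix.mul_apply, Finset.mul_sum]
      exact Finset.sum_congr rfl fun m _ => by ring
    calc ∑ i, x i * (P ^ (k+1)) i j
        = ∑ i, ∑ m, x i * (P ^ k) i m * P m j := Finset.sum_congr rfl fun i _ => e1 i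
      _ = ∑ m, ∑ i, x i * (P ^ k) i m * P m j := Finset.sum_comm
      _ = ∑ m, (∑ i, x i * (P ^ k) i m) * P m j := by
          refine Finset.sum_congr rfl fun m _ => ?_
          rw [Finset.sum_mul]
      _ = ∑ m, x m * P m j := Finset.sum_congr rfl fun m _ => by rw [ih m]
      _ = x j := h j

lemma reach_aux (f g : S → S) (i j : S) (h : ∀ y, y ≠ i → f y = g y)
    (Q : ∃ m, g^[m] i = j) :
    ∀ k x, f^[k] x = i → ∃ m, g^[m] x = j := by
  intro k
  induction k with
  | zero => intro x hx; rw [Function.iterate_zero_apply] at hx; subst hx; exact Q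
  | succ k ih =>
    intro x hx
    by_cases hxi : x = i
    · subst hxi; exact Q
    · rw [Function.iterate_succ_apply] at hx
      obtain ⟨m, hm⟩ := ih (f x) hx
      exact ⟨m + 1, by rw [Function.iterate_succ_apply, ← h x hxi, hm]⟩

lemma iter_agree (f g : S → S) (i x : S) (h : ∀ y, y ≠ i → f y = g y)
    (t : ℕ) (ht : ∀ l, l < t → f^[l] x ≠ i) :
    ∀ l, l ≤ t → g^[l] x = f^[l] x := by
  intro l
  induction l with
  | zero => intro _; rfl
  | succ l ih =>
    intro hl
    have hl' : l ≤ t := Nat.le_of_succ_le hl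
    rw [Function.iterate_succ_apply', Function.iterate_succ_apply',
      ih hl', h _ (ht l (Nat.lt_of_succ_le hl))]

lemma per_iter (f : S → S) (x : S) (p : ℕ) (hp : f^[p] x = x) :
    ∀ n, f^[n * p] x = x := by
  intro n
  induction n with
  | zero => simp
  | succ n ih =>
    rw [Nat.succ_mul, Function.iterate_add_apply, hp, ih]

lemma iter_mod (f : S → S) (x : S) (p t : ℕ) (hp : f^[p] x = x) :
    f^[t] x = f^[t % p] x := by
  conv_lhs => rw [← Nat.div_add_mod t p]
  rw [Nat.add_comm, Function.iterate_add_apply, Nat.mul_comm,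
    per_iter f x p hp (t / p)]


lemma prod_update_edge (P : Matrix S S ℝ) (i j : S) (f : S → S) :
    (∏ x, P x (Function.update f i j x)) = P i j * arbWeight P i f := by
  rw [← Finset.mul_prod_erase Finset.univ (fun x => P x (Function.update f i j x))
    (Finset.mem_univ i), Function.update_self]
  congr 1
  refine Finset.prod_congr rfl fun x hx => ?_
  rw [Function.update_of_ne (Finset.ne_of_mem_erase hx)]

open Classical in
/-- The cycle predecessor of `j` in the functional graph of `g`. -/
noncomputable def cyc (j : S) (g : S → S) : S :=
  if h : ∃ k, g^[k] (g j) = j then g^[Nat.find h] j else j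

open Classical in
lemma arbSum_eq_T (P : Matrix S S ℝ) (hP : RowStochastic P) (j : S) :
    arbSum P j =
      ∑ g ∈ Finset.univ.filter (fun g : S → S => ∀ x, ∃ k, g^[k] x = j),
        ∏ x, P x (g x) := by
  rw [arbSum]
  have h1 : ∀ f : S → S, arbWeight P j f = ∑ m, arbWeight P j f * P j m := by
    intro f
    rw [← Finset.mul_sum, hP.2 j, mul_one]
  rw [Finset.sum_congr rfl fun f _ => h1 f, ← Finset.sum_product']
  refine Finset.sum_nbij' (fun p => Function.update p.1 j p.2)
    (fun g => (Function.update g j j, g j)) ?_ ?_ ?_ ?_ ?_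
  · rintro ⟨f, m⟩ hp
    rw [Finset.mem_product, Finset.mem_filter] at hp
    obtain ⟨⟨-, harb⟩, -⟩ := hp
    rw [Finset.mem_filter]
    refine ⟨Finset.mem_univ _, fun x => ?_⟩
    obtain ⟨k, hk⟩ := harb.2 x
    exact reach_aux f (Function.update f j m) j j
      (fun y hy => (Function.update_of_ne hy _ _).symm) ⟨0, rfl⟩ k x hk
  · intro g hg
    rw [Finset.mem_filter] at hg
    rw [Finset.mem_product, Finset.mem_filter]
    refine ⟨⟨Finset.mem_univ _, Function.update_self _ _ _, fun x => ?_⟩, Finset.mem_univ _⟩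
    obtain ⟨k, hk⟩ := hg.2 x
    exact reach_aux g (Function.update g j j) j j
      (fun y hy => (Function.update_of_ne hy _ _).symm) ⟨0, rfl⟩ k x hk
  · rintro ⟨f, m⟩ hp
    rw [Finset.mem_product, Finset.mem_filter] at hp
    obtain ⟨⟨-, harb⟩, -⟩ := hp
    have hfj : f j = j := harb.1
    have h2 := Function.update_eq_self j f
    rw [hfj] at h2
    show (Function.update (Function.update f j m) j j, Function.update f j m j) = (f, m)
    rw [Prod.mk.injEq]
    exact ⟨by rw [Function.update_idem, h2], Function.update_self _ _ _⟩
  · intro g hg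
    have h2 := Function.update_eq_self j g
    dsimp only
    rw [Function.update_idem]
    exact h2
  · rintro ⟨f, m⟩ hp
    rw [prod_update_edge, mul_comm]

open Classical in
lemma sum_arbSum_mul_eq_T (P : Matrix S S ℝ) (j : S) :
    ∑ i, arbSum P i * P i j =
      ∑ g ∈ Finset.univ.filter (fun g : S → S => ∀ x, ∃ k, g^[k] x = j),
        ∏ x, P x (g x) := by
  have h1 : ∀ i, arbSum P i * P i j =
      ∑ f ∈ Finset.univ.filter (fun f : S → S => IsArb i f), arbWeight P i f * P i j := by
    intro i
    rw [arbSum, Finset.sum_mul]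
  rw [Finset.sum_congr rfl fun i _ => h1 i,
    Finset.sum_sigma' Finset.univ (fun i => Finset.univ.filter (fun f : S → S => IsArb i f))
      (fun i f => arbWeight P i f * P i j)]
  refine Finset.sum_nbij' (fun p => Function.update p.2 p.1 j)
    (fun g => ⟨cyc j g, Function.update g (cyc j g) (cyc j g)⟩) ?_ ?_ ?_ ?_ ?_
  · rintro ⟨i, f⟩ hp
    rw [Finset.mem_sigma, Finset.mem_filter] at hp
    obtain ⟨-, -, harb⟩ := hp
    rw [Finset.mem_filter]
    refine ⟨Finset.mem_univ _, fun x => ?_⟩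
    obtain ⟨k, hk⟩ := harb.2 x
    exact reach_aux f (Function.update f i j) i j
      (fun y hy => (Function.update_of_ne hy _ _).symm)
      ⟨1, by simp⟩ k x hk
  · intro g hg
    rw [Finset.mem_filter] at hg
    obtain ⟨-, hg⟩ := hg
    have hex : ∃ k, g^[k] (g j) = j := hg (g j)
    have hcyc_eq : cyc j g = g^[Nat.find hex] j := by rw [cyc, dif_pos hex]
    set i := cyc j g with hi
    rw [Finset.mem_sigma, Finset.mem_filter]
    refine ⟨Finset.mem_univ _, Finset.mem_univ _, Function.update_self _ _ _, fun x => ?_⟩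
    obtain ⟨k, hk⟩ := hg x
    have hji : g^[Nat.find hex] j = i := hcyc_eq.symm
    have hxk : g^[Nat.find hex + k] x = i := by
      rw [Function.iterate_add_apply, hk, hji]
    exact reach_aux g (Function.update g i i) i i
      (fun y hy => (Function.update_of_ne hy _ _).symm) ⟨0, rfl⟩ _ x hxk
  · rintro ⟨i, f⟩ hp
    rw [Finset.mem_sigma, Finset.mem_filter] at hp
    obtain ⟨-, -, harb'⟩ := hp
    have harb : IsArb i f := harb'
    set g := Function.update f i j with hgdef
    have hagreefg : ∀ y, y ≠ i → f y = g y :=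
      fun y hy => (Function.update_of_ne hy _ _).symm
    have ht0 : ∃ l, f^[l] j = i := harb.2 j
    set t := Nat.find ht0 with htdef
    have htspec : f^[t] j = i := Nat.find_spec ht0
    have htmin : ∀ l, l < t → f^[l] j ≠ i := fun l hl => Nat.find_min ht0 hl
    have hagree : ∀ l, l ≤ t → g^[l] j = f^[l] j :=
      iter_agree f g i j hagreefg t htmin
    have hwit : g^[t] (g j) = j := by
      rw [← Function.iterate_succ_apply, Function.iterate_succ_apply',
        hagree t le_rfl, htspec]
      exact Function.update_self _ _ _
    have hex : ∃ k, g^[k] (g j) = j := ⟨t, hwit⟩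
    have hk0le : Nat.find hex ≤ t := Nat.find_le hwit
    have hk0 : Nat.find hex = t := by
      by_contra hne
      have hk0lt : Nat.find hex < t := lt_of_le_of_ne hk0le hne
      have hper : f^[Nat.find hex + 1] j = j := by
        have h3 := Nat.find_spec hex
        rw [← Function.iterate_succ_apply] at h3
        rw [← hagree (Nat.find hex + 1) (by omega)]
        exact h3
      have h4 : f^[t] j = f^[t % (Nat.find hex + 1)] j :=
        iter_mod f j (Nat.find hex + 1) t hper
      have h5 : t % (Nat.find hex + 1) < t :=
        lt_of_lt_of_le (Nat.mod_lt t (by omega)) (by omega)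
      exact htmin _ h5 (by rw [← h4]; exact htspec)
    have hcyc_eq : cyc j g = i := by
      rw [cyc, dif_pos hex, hk0, hagree t le_rfl, htspec]
    show (⟨cyc j g, Function.update g (cyc j g) (cyc j g)⟩ : (_ : S) × (S → S)) = ⟨i, f⟩
    rw [hcyc_eq]
    have hfi : f i = i := harb.1
    have h2 := Function.update_eq_self i f
    rw [hfi] at h2
    refine congrArg (Sigma.mk i) ?_
    rw [hgdef, Function.update_idem, h2]
  · intro g hg
    rw [Finset.mem_filter] at hg
    obtain ⟨-, hg⟩ := hg
    have hex : ∃ k, g^[k] (g j) = j := hg (g j)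
    have hcyc_eq : cyc j g = g^[Nat.find hex] j := by rw [cyc, dif_pos hex]
    have hgc : g (cyc j g) = j := by
      rw [hcyc_eq, ← Function.iterate_succ_apply' g (Nat.find hex) j,
        Function.iterate_succ_apply g (Nat.find hex) j]
      exact Nat.find_spec hex
    have h2 := Function.update_eq_self (cyc j g) g
    rw [hgc] at h2
    show Function.update (Function.update g (cyc j g) (cyc j g)) (cyc j g) j = g
    rw [Function.update_idem]
    exact h2
  · rintro ⟨i, f⟩ hp
    rw [prod_update_edge, mul_comm]

open Classical in
lemma mu_stationary (P : Matrix S S ℝ) (hP : RowStochastic P) (j : S) :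
    ∑ i, arbSum P i * P i j = arbSum P j :=
  (sum_arbSum_mul_eq_T P j).trans (arbSum_eq_T P hP j).symm

end Aux

/-- Markov chain tree theorem: for an irreducible row-stochastic matrix `P` with
stationary distribution `π`, the total arborescence weight is positive and
`π i = |H_P(i)| / ∑ j, |H_P(j)|`. -/
theorem markov_chain_tree_theorem {S : Type*} [Fintype S] [DecidableEq S] [Nonempty S]
    (P : Matrix S S ℝ) (hP : RowStochastic P) (hirr : MatIrreducible P)
    (π : S → ℝ) (hπ : StationaryDist P π) :
    0 < ∑ j, arbSum P j ∧ ∀ i, π i = arbSum P i / ∑ j, arbSum P j := by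
  classical
  have hμpos : ∀ i, 0 < arbSum P i := arbSum_pos hP hirr
  set Z := ∑ j, arbSum P j with hZdef
  have hZpos : 0 < Z := Finset.sum_pos (fun i _ => hμpos i) Finset.univ_nonempty
  have hZne : Z ≠ 0 := ne_of_gt hZpos
  refine ⟨hZpos, fun i => ?_⟩
  set ν := fun i => arbSum P i / Z with hν
  have hνpos : ∀ i, 0 < ν i := fun i => div_pos (hμpos i) hZpos
  have hνsum : ∑ i, ν i = 1 := by
    rw [hν, ← Finset.sum_div, ← hZdef, div_self hZne]
  have hνstat : ∀ j, ∑ i2, ν i2 * P i2 j = ν j := by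
    intro j
    rw [hν]
    calc ∑ i2, arbSum P i2 / Z * P i2 j
        = (∑ i2, arbSum P i2 * P i2 j) / Z := by
          rw [Finset.sum_div]
          exact Finset.sum_congr rfl fun _ _ => by ring
      _ = arbSum P j / Z := by rw [mu_stationary P hP j]
  obtain ⟨hπ0, hπ1, hπstat⟩ := hπ
  obtain ⟨i0, -, hi0⟩ :=
    Finset.exists_min_image Finset.univ (fun i => π i / ν i) Finset.univ_nonempty
  set c := π i0 / ν i0 with hc
  set δ := fun i => π i - c * ν i with hδ
  have hδ0 : ∀ x, 0 ≤ δ x := by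
    intro x
    have h1 : c ≤ π x / ν x := hi0 x (Finset.mem_univ x)
    have h2 : c * ν x ≤ (π x / ν x) * ν x :=
      mul_le_mul_of_nonneg_right h1 (le_of_lt (hνpos x))
    rw [div_mul_cancel₀ _ (ne_of_gt (hνpos x))] at h2
    simpa [hδ] using sub_nonneg.mpr h2
  have hδi0 : δ i0 = 0 := by
    simp only [hδ, hc]
    rw [div_mul_cancel₀ _ (ne_of_gt (hνpos i0))]
    ring
  have hδstat : ∀ j, ∑ i2, δ i2 * P i2 j = δ j := by
    intro j
    simp only [hδ, sub_mul]
    rw [Finset.sum_sub_distrib, hπstat j]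
    congr 1
    calc ∑ i2, c * ν i2 * P i2 j = c * ∑ i2, ν i2 * P i2 j := by
          rw [Finset.mul_sum]
          exact Finset.sum_congr rfl fun _ _ => by ring
      _ = c * ν j := by rw [hνstat j]
  have hδzero : ∀ x, δ x = 0 := by
    intro x
    obtain ⟨k, -, hk⟩ := hirr x i0
    have h1 : ∑ i2, δ i2 * (P ^ k) i2 i0 = 0 := by rw [stat_pow hδstat k i0, hδi0]
    have h2 : ∀ i2 ∈ Finset.univ, (0:ℝ) ≤ δ i2 * (P ^ k) i2 i0 :=
      fun i2 _ => mul_nonneg (hδ0 i2) (pow_entry_nonneg hP k i2 i0)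
    have h3 := (Finset.sum_eq_zero_iff_of_nonneg h2).mp h1 x (Finset.mem_univ x)
    rcases mul_eq_zero.mp h3 with h | h
    · exact h
    · exact absurd h (ne_of_gt hk)
  have hc1 : c = 1 := by
    have hsum : ∑ x, π x = ∑ x, c * ν x :=
      Finset.sum_congr rfl fun x _ => by
        have hx := hδzero x
        simp only [hδ] at hx
        linarith
    rw [hπ1, ← Finset.mul_sum, hνsum, mul_one] at hsum
    exact hsum.symm
  have hi := hδzero i
  simp only [hδ, hc1, one_mul] at hi
  have : π i = ν i := by linarith
  rw [this, hν]
end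

section
/- Let P be a row-stochastic matrix on a finite set S whose closed communicating classes C_1, …, C_m cover S (i.e., S = C_1 ∪ … ∪ C_m, so there are no transient states). Let Q be a row-stochastic matrix on S and define the m × m matrix Γ by Γ(k,l) := (1/|C_k|) Σ_{x∈C_k} Σ_{y∈C_l} Q(x,y). If Γ is irreducible, then for every ε ∈ (0,1) the matrix P_ε := (1−ε)P + εQ is irreducible. -/
open Filter Topology

lemma pow_entries_nonneg {T : Type*} [Fintype T] [DecidableEq T] {M : Matrix T T ℝ}
    (hM : ∀ i j, 0 ≤ M i j) : ∀ k i j, 0 ≤ (M ^ k) i j := by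
  intro k
  induction k with
  | zero =>
    intro i j
    rw [pow_zero]
    by_cases h : i = j <;> simp [Matrix.one_apply, h]
  | succ n ih =>
    intro i j
    rw [pow_succ, Matrix.mul_apply]
    exact Finset.sum_nonneg fun x _ => mul_nonneg (ih i x) (hM x j)

lemma pow_entry_pos_trans {T : Type*} [Fintype T] [DecidableEq T] {M : Matrix T T ℝ}
    (hM : ∀ i j, 0 ≤ M i j) {a b : ℕ} {i x j : T}
    (ha : 0 < (M ^ a) i x) (hb : 0 < (M ^ b) x j) : 0 < (M ^ (a + b)) i j := by
  rw [pow_add, Matrix.mul_apply]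
  exact Finset.sum_pos'
    (fun y _ => mul_nonneg (pow_entries_nonneg hM a i y) (pow_entries_nonneg hM b y j))
    ⟨x, Finset.mem_univ x, mul_pos ha hb⟩

lemma pow_entries_mono {T : Type*} [Fintype T] [DecidableEq T] {N M : Matrix T T ℝ}
    (hN : ∀ i j, 0 ≤ N i j) (h : ∀ i j, N i j ≤ M i j) :
    ∀ k i j, (N ^ k) i j ≤ (M ^ k) i j := by
  intro k
  induction k with
  | zero => intro i j; simp
  | succ n ih =>
    intro i j
    rw [pow_succ, pow_succ, Matrix.mul_apply, Matrix.mul_apply]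
    refine Finset.sum_le_sum fun x _ => ?_
    exact mul_le_mul (ih i x) (h x j) (hN x j)
      (le_trans (pow_entries_nonneg hN n i x) (ih i x))

lemma exists_pos_of_sum_pos {ι : Type*} {s : Finset ι} {f : ι → ℝ}
    (h : 0 < ∑ i ∈ s, f i) : ∃ i ∈ s, 0 < f i := by
  by_contra hc
  push_neg at hc
  exact absurd (Finset.sum_nonpos hc) (not_le.mpr h)

/-- A closed communicating class: a nonempty set which no transition leaves, and
within which every state leads to every other in some number `k ≥ 1` of steps. -/
def ClosedClass {S : Type*} [Fintype S] [DecidableEq S] (P : Matrix S S ℝ) (C : Set S) : Prop :=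
  C.Nonempty ∧ (∀ i ∈ C, ∀ j, j ∉ C → P i j = 0) ∧
    ∀ i ∈ C, ∀ j ∈ C, ∃ k, 1 ≤ k ∧ 0 < (P ^ k) i j

/-- If the closed communicating classes of `P` cover `S` (no transient states) and
the reduced matrix `Γ` is irreducible, then `P_ε := (1−ε)P + εQ` is irreducible
for every `ε ∈ (0,1)`. -/
theorem pagerank_perturbed_irreducible
    {S : Type*} [Fintype S] [DecidableEq S] [Nonempty S]
    (P : Matrix S S ℝ) (hP : RowStochastic P)
    (m : ℕ) (hm : 1 ≤ m) (C : Fin m → Finset S)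
    (hCcls : ∀ k, ClosedClass P (C k : Set S))
    (hCall : ∀ D : Set S, ClosedClass P D → ∃ k, D = (C k : Set S))
    (hCinj : Function.Injective C)
    (hcover : ∀ v : S, ∃ k, v ∈ C k)
    (Q : Matrix S S ℝ) (hQ : RowStochastic Q)
    (Γ : Matrix (Fin m) (Fin m) ℝ)
    (hΓdef : ∀ k l, Γ k l = (1 / ((C k).card : ℝ)) * ∑ x ∈ C k, ∑ y ∈ C l, Q x y)
    (hΓirr : MatIrreducible Γ) :
    ∀ ε ∈ Set.Ioo (0 : ℝ) 1, MatIrreducible ((1 - ε) • P + ε • Q) := by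
  intro ε hε i j
  obtain ⟨hε0, hε1⟩ := hε
  set M : Matrix S S ℝ := (1 - ε) • P + ε • Q with hMdef
  have hMapp : ∀ a b, M a b = (1 - ε) * P a b + ε * Q a b := by
    intro a b
    simp [hMdef, Matrix.add_apply, Matrix.smul_apply, smul_eq_mul]
  have hMnn : ∀ a b, 0 ≤ M a b := by
    intro a b
    rw [hMapp]
    have := hP.1 a b; have := hQ.1 a b
    nlinarith
  -- within-class accessibility for M
  have hwithin : ∀ k : Fin m, ∀ a ∈ C k, ∀ b ∈ C k, ∃ s, 1 ≤ s ∧ 0 < (M ^ s) a b := by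
    intro k a ha b hb
    obtain ⟨t, ht1, htpos⟩ := (hCcls k).2.2 a (by exact_mod_cast ha) b (by exact_mod_cast hb)
    refine ⟨t, ht1, ?_⟩
    have hNnn : ∀ x y, 0 ≤ ((1 - ε) • P) x y := by
      intro x y
      have := hP.1 x y
      simp only [Matrix.smul_apply, smul_eq_mul]
      nlinarith
    have hle : ∀ x y, ((1 - ε) • P) x y ≤ M x y := by
      intro x y
      have := hQ.1 x y
      rw [hMapp]
      simp only [Matrix.smul_apply, smul_eq_mul]
      nlinarith
    have h1 := pow_entries_mono hNnn hle t a b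
    have h2 : (((1 - ε) • P) ^ t) a b = (1 - ε) ^ t * (P ^ t) a b := by
      rw [smul_pow]
      simp [smul_eq_mul]
    have h3 : 0 < (1 - ε) ^ t * (P ^ t) a b :=
      mul_pos (pow_pos (by linarith) t) htpos
    rw [h2] at h1
    linarith
  -- Γ is nonnegative
  have hΓnn : ∀ k l, 0 ≤ Γ k l := by
    intro k l
    rw [hΓdef]
    apply mul_nonneg (by positivity)
    exact Finset.sum_nonneg fun x _ => Finset.sum_nonneg fun y _ => hQ.1 x y
  -- a single positive Γ entry gives accessibility between classes
  have hstep : ∀ k l, 0 < Γ k l → ∀ a ∈ C k, ∀ b ∈ C l, ∃ s, 1 ≤ s ∧ 0 < (M ^ s) a b := by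
    intro k l hkl a ha b hb
    rw [hΓdef] at hkl
    have hsum : 0 < ∑ x ∈ C k, ∑ y ∈ C l, Q x y := by
      by_contra hc
      push_neg at hc
      nlinarith [one_div_nonneg.mpr (Nat.cast_nonneg (C k).card : (0:ℝ) ≤ ((C k).card : ℝ))]
    obtain ⟨x, hx, hxsum⟩ := exists_pos_of_sum_pos hsum
    obtain ⟨y, hy, hxy⟩ := exists_pos_of_sum_pos hxsum
    have hMxy : 0 < M x y := by
      have := hP.1 x y
      rw [hMapp]
      nlinarith
    obtain ⟨s1, hs1, hp1⟩ := hwithin k a ha x hx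
    obtain ⟨s2, hs2, hp2⟩ := hwithin l y hy b hb
    refine ⟨s1 + 1 + s2, by omega, ?_⟩
    have hxy1 : 0 < (M ^ 1) x y := by rwa [pow_one]
    exact pow_entry_pos_trans hMnn (pow_entry_pos_trans hMnn hp1 hxy1) hp2
  -- positive Γ^t entry gives accessibility, by induction on t
  have hmain : ∀ t, 1 ≤ t → ∀ k l : Fin m, 0 < (Γ ^ t) k l →
      ∀ a ∈ C k, ∀ b ∈ C l, ∃ s, 1 ≤ s ∧ 0 < (M ^ s) a b := by
    intro t ht
    induction t, ht using Nat.le_induction with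
    | base =>
      intro k l h
      rw [pow_one] at h
      exact hstep k l h
    | succ t ht ih =>
      intro k l hpos a ha b hb
      rw [pow_succ, Matrix.mul_apply] at hpos
      obtain ⟨r, -, hr⟩ := exists_pos_of_sum_pos hpos
      have h1 : 0 < (Γ ^ t) k r := by
        rcases mul_pos_iff.mp hr with ⟨h, _⟩ | ⟨h, _⟩
        · exact h
        · exact absurd h (not_lt.mpr (pow_entries_nonneg hΓnn t k r))
      have h2 : 0 < Γ r l := by
        rcases mul_pos_iff.mp hr with ⟨_, h⟩ | ⟨_, h⟩
        · exact h
        · exact absurd h (not_lt.mpr (hΓnn r l))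
      obtain ⟨z, hz⟩ := (hCcls r).1
      have hz' : z ∈ C r := by exact_mod_cast hz
      obtain ⟨s1, hs1, hp1⟩ := ih k r h1 a ha z hz'
      obtain ⟨s2, hs2, hp2⟩ := hstep r l h2 z hz' b hb
      exact ⟨s1 + s2, by omega, pow_entry_pos_trans hMnn hp1 hp2⟩
  obtain ⟨k, hk⟩ := hcover i
  obtain ⟨l, hl⟩ := hcover j
  obtain ⟨t, ht, hpos⟩ := hΓirr k l
  exact hmain t ht k l hpos i hk j hl
end

section
/- Let P and Q be row-stochastic matrices on a finite set S such that P_ε := (1−ε)P + εQ is irreducible for every ε ∈ (0,1), and let π^{(ε)} denote the unique stationary distribution of P_ε. Then for each i ∈ S there exist real polynomials p_i and q_i such that q_i(ε) ≠ 0 and π^{(ε)}(i) = p_i(ε)/q_i(ε) for every ε ∈ (0,1); in particular, ε ↦ π^{(ε)}(i) is a rational (hence real-analytic) function of ε on (0,1). -/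
open Filter Topology
open Matrix Polynomial

section myaux
variable {S : Type*} [Fintype S] [DecidableEq S]

variable {S : Type*} [Fintype S] [DecidableEq S]

lemma vecMul_pow_fixed (A : Matrix S S ℝ) (u : S → ℝ) (h : u ᵥ* A = u) :
    ∀ k, u ᵥ* (A ^ k) = u := by
  intro k; induction k with
  | zero => simp
  | succ k ih => rw [pow_succ, ← Matrix.vecMul_vecMul, ih, h]

lemma pow_nonneg_entries (A : Matrix S S ℝ) (hA : ∀ i j, 0 ≤ A i j) :
    ∀ k i j, 0 ≤ (A ^ k) i j := by
  intro k; induction k with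
  | zero => intro i j; by_cases h : i = j <;> simp [pow_zero, Matrix.one_apply, h]
  | succ k ih =>
      intro i j
      rw [pow_succ, Matrix.mul_apply]
      exact Finset.sum_nonneg fun l _ => mul_nonneg (ih i l) (hA l j)

lemma pos_everywhere (A : Matrix S S ℝ) (hA : ∀ i j, 0 ≤ A i j)
    (hirr : ∀ i j, ∃ k, 1 ≤ k ∧ 0 < (A ^ k) i j)
    (u : S → ℝ) (hu : ∀ i, 0 ≤ u i) (hfix : u ᵥ* A = u)
    (i0 : S) (hi0 : 0 < u i0) : ∀ j, 0 < u j := by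
  intro j
  obtain ⟨k, _, hk⟩ := hirr i0 j
  have h1 := vecMul_pow_fixed A u hfix k
  have h2 : u j = ∑ i, u i * (A ^ k) i j := by
    conv_lhs => rw [← h1]
    simp [Matrix.vecMul, dotProduct]
  rw [h2]
  exact lt_of_lt_of_le (mul_pos hi0 hk)
    (Finset.single_le_sum (fun i _ => mul_nonneg (hu i) (pow_nonneg_entries A hA k i j))
      (Finset.mem_univ i0))

lemma fixed_sum_zero_eq_zero (A : Matrix S S ℝ) (hA : ∀ i j, 0 ≤ A i j)
    (hrow : ∀ i, ∑ j, A i j = 1)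
    (hirr : ∀ i j, ∃ k, 1 ≤ k ∧ 0 < (A ^ k) i j)
    (v : S → ℝ) (hfix : v ᵥ* A = v) (hsum : ∑ i, v i = 0) : v = 0 := by
  by_contra hv
  set a : S → ℝ := fun i => |v i| with ha
  have hvec : ∀ w : S → ℝ, ∀ j, (w ᵥ* A) j = ∑ i, w i * A i j := by
    intro w j; simp [Matrix.vecMul, dotProduct]
  have habs : ∀ j, a j ≤ (a ᵥ* A) j := by
    intro j
    have : a j = |(v ᵥ* A) j| := by rw [hfix]
    rw [this, hvec v j, hvec a j]
    refine le_trans (Finset.abs_sum_le_sum_abs _ _) (le_of_eq ?_)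
    refine Finset.sum_congr rfl fun i _ => ?_
    rw [abs_mul, abs_of_nonneg (hA i j)]
  have hsum2 : ∑ j, (a ᵥ* A) j = ∑ j, a j := by
    simp only [hvec]
    rw [Finset.sum_comm]
    refine Finset.sum_congr rfl fun i _ => ?_
    rw [← Finset.mul_sum, hrow i, mul_one]
  have hfixa : a ᵥ* A = a := by
    funext j
    have key : ∑ j, ((a ᵥ* A) j - a j) = 0 := by
      rw [Finset.sum_sub_distrib, hsum2, sub_self]
    have := (Finset.sum_eq_zero_iff_of_nonneg
      (fun j _ => sub_nonneg.mpr (habs j))).mp key j (Finset.mem_univ j)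
    linarith
  -- w = a + v is a nonnegative fixed vector
  set w : S → ℝ := fun i => a i + v i with hw
  have hwfix : w ᵥ* A = w := by
    have : w = a + v := rfl
    rw [this, Matrix.add_vecMul, hfixa, hfix]
  have hwnn : ∀ i, 0 ≤ w i := fun i => by
    have := neg_abs_le (v i); simp only [hw, ha]; linarith
  -- there are a positive and a negative coordinate
  have hex : ∃ i, v i ≠ 0 := by
    by_contra h; push_neg at h; exact hv (funext h)
  obtain ⟨i1, hi1⟩ := hex
  have hpos : ∃ i, 0 < v i := by
    by_contra h; push_neg at h
    have : ∀ i ∈ Finset.univ, (0:ℝ) ≤ -v i := fun i _ => by linarith [h i]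
    have h0 : ∑ i, -v i = 0 := by rw [Finset.sum_neg_distrib, hsum, neg_zero]
    have := (Finset.sum_eq_zero_iff_of_nonneg this).mp h0 i1 (Finset.mem_univ i1)
    exact hi1 (by linarith)
  have hneg : ∃ i, v i < 0 := by
    by_contra h; push_neg at h
    have h0 := (Finset.sum_eq_zero_iff_of_nonneg (fun i _ => h i)).mp hsum i1 (Finset.mem_univ i1)
    exact hi1 h0
  obtain ⟨ia, hia⟩ := hpos
  obtain ⟨ib, hib⟩ := hneg
  have hwa : 0 < w ia := by
    have : 0 ≤ a ia := abs_nonneg _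
    simp only [hw]; linarith
  have := pos_everywhere A hA hirr w hwnn hwfix ia hwa ib
  have : w ib = 0 := by
    simp only [hw, ha]; rw [abs_of_neg hib]; ring
  linarith


end myaux

/-- Each coordinate of the stationary distribution of `P_ε := (1−ε)P + εQ` is a
rational function of `ε` on `(0,1)`: there are polynomials `p_i, q_i` with
`q_i(ε) ≠ 0` and `π^{(ε)}(i) = p_i(ε)/q_i(ε)` for all `ε ∈ (0,1)`. -/
theorem perturbed_stationary_is_rational_in_epsilon
    {S : Type*} [Fintype S] [DecidableEq S] [Nonempty S]
    (P Q : Matrix S S ℝ) (hP : RowStochastic P) (hQ : RowStochastic Q)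
    (Pe : ℝ → Matrix S S ℝ)
    (hPe : ∀ ε, Pe ε = (1 - ε) • P + ε • Q)
    (hPeirr : ∀ ε ∈ Set.Ioo (0 : ℝ) 1, MatIrreducible (Pe ε))
    (πe : ℝ → S → ℝ)
    (hπe : ∀ ε ∈ Set.Ioo (0 : ℝ) 1, StationaryDist (Pe ε) (πe ε)) :
    ∀ i : S, ∃ p q : Polynomial ℝ, ∀ ε ∈ Set.Ioo (0 : ℝ) 1,
      q.eval ε ≠ 0 ∧ πe ε i = p.eval ε / q.eval ε := by
  obtain ⟨hP1, hP2⟩ := hP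
  obtain ⟨hQ1, hQ2⟩ := hQ
  have hP : (∀ i j, 0 ≤ P i j) ∧ ∀ i, ∑ j, P i j = 1 := ⟨hP1, hP2⟩
  have hQ : (∀ i j, 0 ≤ Q i j) ∧ ∀ i, ∑ j, Q i j = 1 := ⟨hQ1, hQ2⟩
  have hπe : ∀ ε ∈ Set.Ioo (0 : ℝ) 1,
      (∀ i, 0 ≤ πe ε i) ∧ (∑ i, πe ε i = 1) ∧ ∀ j, ∑ i, πe ε i * Pe ε i j = πe ε j := hπe
  have hPeirr : ∀ ε ∈ Set.Ioo (0 : ℝ) 1, ∀ i j, ∃ k, 1 ≤ k ∧ 0 < ((Pe ε) ^ k) i j := hPeirr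
  intro i
  set Mp : Matrix S S (Polynomial ℝ) := Matrix.of fun a b =>
    (if a = b then 1 else 0) + 1 - ((1 - X) * C (P a b) + X * C (Q a b)) with hMp
  refine ⟨∑ j, (Mp.adjugate) j i, Mp.det, ?_⟩
  rintro ε ⟨hε0, hε1⟩
  set M : Matrix S S ℝ := Mp.map (eval ε) with hM
  have hMentry : ∀ a b, M a b = (if a = b then 1 else 0) + 1 - Pe ε a b := by
    intro a b
    simp only [hM, hMp, Matrix.map_apply, Matrix.of_apply, hPe, Matrix.add_apply,
      Matrix.smul_apply, smul_eq_mul, eval_sub, eval_add, eval_mul, eval_one, eval_X,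
      eval_C, apply_ite (eval ε), eval_zero]
  -- Pe ε is row-stochastic
  have hPnn : ∀ a b, 0 ≤ Pe ε a b := by
    intro a b
    rw [hPe]
    simp only [Matrix.add_apply, Matrix.smul_apply, smul_eq_mul]
    have := hP.1 a b; have := hQ.1 a b
    nlinarith
  have hProw : ∀ a, ∑ b, Pe ε a b = 1 := by
    intro a
    rw [hPe]
    simp only [Matrix.add_apply, Matrix.smul_apply, smul_eq_mul]
    rw [Finset.sum_add_distrib, ← Finset.mul_sum, ← Finset.mul_sum, hP.2 a, hQ.2 a]
    ring
  obtain ⟨hπnn, hπsum, hπfix⟩ := hπe ε ⟨hε0, hε1⟩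
  have hvec : ∀ (w : S → ℝ) (A : Matrix S S ℝ) (j : S), (w ᵥ* A) j = ∑ a, w a * A a j := by
    intro w A j; simp [Matrix.vecMul, dotProduct]
  -- the linear system
  have hπM : πe ε ᵥ* M = fun _ => 1 := by
    funext j
    rw [hvec]
    have : ∀ a, πe ε a * M a j =
        (if a = j then πe ε a else 0) + πe ε a - πe ε a * Pe ε a j := by
      intro a; rw [hMentry]
      by_cases h : a = j <;> simp [h] <;> ring
    rw [Finset.sum_congr rfl fun a _ => this a, Finset.sum_sub_distrib,
      Finset.sum_add_distrib, Finset.sum_ite_eq' Finset.univ j, hπsum, hπfix j]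
    simp
  -- det M ≠ 0
  have hdet : M.det ≠ 0 := by
    intro h
    obtain ⟨v, hv0, hvM⟩ := Matrix.exists_vecMul_eq_zero_iff.mpr h
    have hrow : ∀ j, v j + (∑ a, v a) - (∑ a, v a * Pe ε a j) = 0 := by
      intro j
      have h0 : (v ᵥ* M) j = 0 := by rw [hvM]; rfl
      rw [hvec] at h0
      have : ∀ a, v a * M a j = (if a = j then v a else 0) + v a - v a * Pe ε a j := by
        intro a; rw [hMentry]
        by_cases h : a = j <;> simp [h] <;> ring
      rw [Finset.sum_congr rfl fun a _ => this a, Finset.sum_sub_distrib,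
        Finset.sum_add_distrib, Finset.sum_ite_eq' Finset.univ j] at h0
      simpa using h0
    have hsumv : ∑ a, v a = 0 := by
      have hs := Finset.sum_congr rfl (fun j (_ : j ∈ Finset.univ) => (hrow j))
      rw [Finset.sum_const] at hs
      have hswap : ∑ j : S, ∑ a, v a * Pe ε a j = ∑ a, v a := by
        rw [Finset.sum_comm]
        refine Finset.sum_congr rfl fun a _ => ?_
        rw [← Finset.mul_sum, hProw a, mul_one]
      rw [Finset.sum_sub_distrib, Finset.sum_add_distrib, hswap, Finset.sum_const] at hs
      have hcard : 0 < (Finset.univ : Finset S).card := Finset.univ_nonempty.card_pos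
      simp only [nsmul_eq_mul, smul_zero] at hs
      have : ((Finset.univ : Finset S).card : ℝ) * (∑ a, v a) = 0 := by linarith
      rcases mul_eq_zero.mp this with h' | h'
      · exact absurd h' (by positivity)
      · exact h'
    have hfixv : v ᵥ* Pe ε = v := by
      funext j
      rw [hvec]
      have := hrow j
      rw [hsumv] at this
      linarith
    exact hv0 (fixed_sum_zero_eq_zero (Pe ε) hPnn hProw (hPeirr ε ⟨hε0, hε1⟩) v hfixv hsumv)
  -- Cramer's rule
  have hcramer : M.det * πe ε i = ∑ j, M.adjugate j i := by
    have h1 : πe ε ᵥ* (M * M.adjugate) = (fun _ => 1) ᵥ* M.adjugate := by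
      rw [← Matrix.vecMul_vecMul, hπM]
    rw [Matrix.mul_adjugate] at h1
    have h2 := congrFun h1 i
    rw [hvec] at h2
    simp only [Matrix.smul_apply, Matrix.one_apply, smul_eq_mul, mul_ite, mul_one, mul_zero,
      ite_mul, zero_mul, Finset.sum_ite_eq', Finset.mem_univ, if_true] at h2
    rw [mul_comm] at h2
    rw [h2, hvec]
    simp
  -- transfer to polynomial evaluations
  have hqev : Mp.det.eval ε = M.det := by
    have := RingHom.map_det (evalRingHom ε) Mp
    simpa [RingHom.mapMatrix_apply, hM] using this
  have hpev : (∑ j, Mp.adjugate j i).eval ε = ∑ j, M.adjugate j i := by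
    have hadj := RingHom.map_adjugate (evalRingHom ε) Mp
    rw [eval_finset_sum]
    refine Finset.sum_congr rfl fun j _ => ?_
    have := congrFun (congrFun hadj j) i
    simpa [RingHom.mapMatrix_apply, hM, Matrix.map_apply] using this
  rw [hqev, hpev]
  refine ⟨hdet, ?_⟩
  field_simp
  linarith [hcramer]
end

section
/- Let P be a row-stochastic matrix on a finite set S with |S| = n, whose closed communicating classes are exactly C_1, …, C_M with M ≥ 2, and set C := C_1 ∪ … ∪ C_M. For ε ∈ (0,1) let P_ε := (1−ε)P + (ε/n)·J, where J is the all-ones matrix. Let v ∈ C_1 and let a be an arborescence of C rooted at v (a map a : C ∖ {v} → C whose iterates from every j ∈ C ∖ {v} reach v, with no cycles) such that exactly M−1 elements j ∈ C ∖ {v} have j and a(j) in different classes among C_1,…,C_M. Let W := ∏ P(j, a(j)), the product being over all j ∈ C ∖ {v} such that j and a(j) lie in the same class. Then, as ε → 0⁺, ∏_{j∈C∖{v}} P_ε(j, a(j)) = ε^{M−1} (1−ε)^{|C|−M} n^{−(M−1)} W + O(ε^M). -/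
open Filter Topology Asymptotics

private lemma diffAt_finset_prod {ι : Type*} (u : Finset ι) (g : ι → ℝ → ℝ) (x : ℝ)
    (h : ∀ i ∈ u, DifferentiableAt ℝ (g i) x) :
    DifferentiableAt ℝ (fun ε => ∏ i ∈ u, g i ε) x := by
  classical
  induction u using Finset.cons_induction with
  | empty => simpa using differentiableAt_const (1 : ℝ)
  | cons a s ha ih =>
    simp only [Finset.prod_cons]
    exact (h a (Finset.mem_cons_self a s)).mul
      (ih fun i hi => h i (Finset.mem_cons_of_mem hi))

/-- Leading-order weight of an arborescence of `C := C_1 ∪ ⋯ ∪ C_M` rooted at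
`v ∈ C_1` using exactly `M − 1` cross-class (`ε`-) edges, under the uniform
perturbation `P_ε := (1−ε)P + (ε/n)𝟙𝟙ᵀ`:
`∏_{j∈C∖{v}} P_ε(j, a(j)) = ε^{M−1}(1−ε)^{|C|−M} n^{−(M−1)} W + O(ε^M)` as `ε → 0⁺`. -/
theorem arborescence_weight_leading_term_uniform
    {S : Type*} [Fintype S] [DecidableEq S] [Nonempty S]
    (P : Matrix S S ℝ) (hP : RowStochastic P)
    (M : ℕ) (hM : 2 ≤ M) (C : Fin M → Finset S)
    (hCcls : ∀ k, ClosedClass P (C k : Set S))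
    (hCall : ∀ D : Set S, ClosedClass P D → ∃ k, D = (C k : Set S))
    (hCinj : Function.Injective C)
    (CU : Finset S) (hCU : CU = Finset.univ.biUnion C)
    (Pe : ℝ → Matrix S S ℝ)
    (hPe : ∀ ε, Pe ε =
      (1 - ε) • P + (ε / (Fintype.card S : ℝ)) • Matrix.of (fun _ _ => (1 : ℝ)))
    (v : S) (hv : v ∈ C ⟨0, by omega⟩)
    (f : S → S) (hfv : f v = v)
    (hfC : ∀ j ∈ CU, f j ∈ CU)
    (hreach : ∀ j ∈ CU, ∃ k, f^[k] j = v)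
    (hcross : ((CU.erase v).filter
        (fun j => ¬ ∃ k, j ∈ C k ∧ f j ∈ C k)).card = M - 1)
    (W : ℝ)
    (hW : W = ∏ j ∈ (CU.erase v).filter (fun j => ∃ k, j ∈ C k ∧ f j ∈ C k),
        P j (f j)) :
    (fun ε : ℝ => (∏ j ∈ CU.erase v, Pe ε j (f j)) -
        ε ^ (M - 1) * (1 - ε) ^ (CU.card - M) *
          ((Fintype.card S : ℝ) ^ (M - 1))⁻¹ * W)
      =O[𝓝[>] (0 : ℝ)] fun ε => ε ^ M := by
  set n : ℝ := (Fintype.card S : ℝ) with hn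
  have hn0 : (0 : ℝ) < n := by
    simp only [hn, Nat.cast_pos]; exact Fintype.card_pos
  set q : S → Prop := fun j => ∃ k, j ∈ C k ∧ f j ∈ C k with hq
  set Tsame := (CU.erase v).filter (fun j => q j) with hTsame
  set Tcross := (CU.erase v).filter (fun j => ¬ q j) with hTcross
  -- cross edges have P j (f j) = 0
  have hPzero : ∀ j ∈ Tcross, P j (f j) = 0 := by
    intro j hj
    rw [hTcross, Finset.mem_filter, Finset.mem_erase] at hj
    obtain ⟨⟨hjv, hjCU⟩, hnq⟩ := hj
    rw [hCU, Finset.mem_biUnion] at hjCU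
    obtain ⟨k, -, hk⟩ := hjCU
    have hf : (f j : S) ∉ (C k : Set S) := fun h => hnq ⟨k, hk, h⟩
    exact (hCcls k).2.1 j hk (f j) hf
  have hvCU : v ∈ CU := by
    rw [hCU]
    exact Finset.mem_biUnion.mpr ⟨⟨0, by omega⟩, Finset.mem_univ _, hv⟩
  have hcardsame : Tsame.card = CU.card - M := by
    have h1 : Tsame.card + Tcross.card = (CU.erase v).card :=
      Finset.card_filter_add_card_filter_not (fun j => q j)
    rw [Finset.card_erase_of_mem hvCU] at h1
    rw [hTcross] at *
    rw [hcross] at h1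
    omega
  -- the product formula
  have key : ∀ ε : ℝ, (∏ j ∈ CU.erase v, Pe ε j (f j))
      = ε ^ (M - 1) * (n ^ (M - 1))⁻¹ *
        ∏ j ∈ Tsame, ((1 - ε) * P j (f j) + ε / n) := by
    intro ε
    have hPeval : ∀ j : S, Pe ε j (f j) = (1 - ε) * P j (f j) + ε / n := by
      intro j
      rw [hPe]
      simp [Matrix.add_apply, Matrix.smul_apply, smul_eq_mul]
    calc ∏ j ∈ CU.erase v, Pe ε j (f j)
        = (∏ j ∈ Tsame, Pe ε j (f j)) * ∏ j ∈ Tcross, Pe ε j (f j) :=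
          (Finset.prod_filter_mul_prod_filter_not (CU.erase v) q _).symm
      _ = (∏ j ∈ Tsame, ((1 - ε) * P j (f j) + ε / n)) * (ε / n) ^ (M - 1) := by
          have h1 : ∏ j ∈ Tsame, Pe ε j (f j)
              = ∏ j ∈ Tsame, ((1 - ε) * P j (f j) + ε / n) :=
            Finset.prod_congr rfl fun j _ => hPeval j
          have h2 : ∏ j ∈ Tcross, Pe ε j (f j) = (ε / n) ^ (M - 1) := by
            rw [Finset.prod_congr rfl (fun j hj => by
              rw [hPeval j, hPzero j hj, mul_zero, zero_add] :
                ∀ j ∈ Tcross, Pe ε j (f j) = ε / n), Finset.prod_const, hcross]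
          rw [h1, h2]
      _ = ε ^ (M - 1) * (n ^ (M - 1))⁻¹ *
            ∏ j ∈ Tsame, ((1 - ε) * P j (f j) + ε / n) := by
          rw [div_pow]
          ring
  -- F and G
  set F : ℝ → ℝ := fun ε => ∏ j ∈ Tsame, ((1 - ε) * P j (f j) + ε / n) with hF
  set G : ℝ → ℝ := fun ε => (1 - ε) ^ (CU.card - M) * W with hG
  have hFG : (fun ε : ℝ => F ε - G ε) =O[𝓝 (0 : ℝ)] (fun ε => ε) := by
    have hd : DifferentiableAt ℝ (fun ε => F ε - G ε) 0 := by
      apply DifferentiableAt.sub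
      · exact diffAt_finset_prod Tsame _ 0 fun i _ =>
          (((differentiableAt_const _).sub differentiableAt_fun_id).mul
            (differentiableAt_const _)).add (differentiableAt_fun_id.div_const n)
      · exact (((differentiableAt_const (1:ℝ)).sub differentiableAt_fun_id).pow _).mul
          (differentiableAt_const _)
    have h0 : F 0 - G 0 = 0 := by
      have : F 0 = W := by
        rw [hF, hW]
        simp
      rw [this, hG]
      simp
    simpa [h0] using hd.isBigO_sub
  have heq : (fun ε : ℝ => (∏ j ∈ CU.erase v, Pe ε j (f j)) -
        ε ^ (M - 1) * (1 - ε) ^ (CU.card - M) * ((Fintype.card S : ℝ) ^ (M - 1))⁻¹ * W)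
      = fun ε : ℝ => (n ^ (M - 1))⁻¹ * (ε ^ (M - 1) * (F ε - G ε)) := by
    funext ε
    rw [key ε, hF, hG, ← hn]
    ring
  rw [heq]
  have hbig : (fun ε : ℝ => ε ^ (M - 1) * (F ε - G ε))
      =O[𝓝 (0 : ℝ)] fun ε => ε ^ M := by
    have := (isBigO_refl (fun ε : ℝ => ε ^ (M - 1)) (𝓝 (0 : ℝ))).mul hFG
    have hpow : (fun ε : ℝ => ε ^ (M - 1) * ε) = fun ε : ℝ => ε ^ M := by
      funext ε
      rw [← pow_succ, Nat.sub_add_cancel (by omega)]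
    rwa [hpow] at this
  exact (hbig.const_mul_left _).mono nhdsWithin_le_nhds
end

section
/- Let P be a row-stochastic matrix on a finite set S. The set Σ(P) of stationary distributions of P is a nonempty convex set, and a stationary distribution π ∈ Σ(P) is an extreme point of Σ(P) if and only if the support {i : π(i) > 0} of π is contained in a single closed communicating class of P. -/
open Filter Topology

section Aux

open Finset Matrix

variable {S : Type*} [Fintype S] [DecidableEq S]

lemma aux_pow_apply_nonneg {P : Matrix S S ℝ} (h : ∀ i j, 0 ≤ P i j) :
    ∀ k i j, 0 ≤ (P ^ k) i j := by
  intro k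
  induction k with
  | zero => intro i j; simp [Matrix.one_apply]; positivity
  | succ n ih =>
    intro i j
    rw [pow_succ, Matrix.mul_apply]
    exact Finset.sum_nonneg fun l _ => mul_nonneg (ih i l) (h l j)

lemma aux_pow_mul_pos {P : Matrix S S ℝ} (h : ∀ i j, 0 ≤ P i j) {k : ℕ} {i l j : S}
    (h1 : 0 < (P ^ k) i l) (h2 : 0 < P l j) : 0 < (P ^ (k + 1)) i j := by
  rw [pow_succ, Matrix.mul_apply]
  have hpos : 0 < (P ^ k) i l * P l j := mul_pos h1 h2
  refine lt_of_lt_of_le hpos ?_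
  exact Finset.single_le_sum (fun m _ => mul_nonneg (aux_pow_apply_nonneg h k i m) (h m j))
    (Finset.mem_univ l)

lemma aux_invariant_pow {P : Matrix S S ℝ} {τ : S → ℝ}
    (h : ∀ j, ∑ i, τ i * P i j = τ j) : ∀ k j, ∑ i, τ i * (P ^ k) i j = τ j := by
  intro k
  induction k with
  | zero => intro j; simp [Matrix.one_apply, mul_ite]
  | succ n ih =>
    intro j
    rw [pow_succ']
    calc ∑ i, τ i * (P * P ^ n) i j
        = ∑ i, ∑ l, τ i * (P i l * (P ^ n) l j) := by
          simp_rw [Matrix.mul_apply, Finset.mul_sum]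
      _ = ∑ l, (∑ i, τ i * P i l) * (P ^ n) l j := by
          rw [Finset.sum_comm]; simp_rw [Finset.sum_mul, mul_assoc]
      _ = ∑ l, τ l * (P ^ n) l j := by simp_rw [h]
      _ = τ j := ih j

/-- If no `π`-mass flows out of `D` in one step, none flows in either. -/
lemma aux_flux_zero {P : Matrix S S ℝ} (hP1 : ∀ i j, 0 ≤ P i j) (hP2 : ∀ i, ∑ j, P i j = 1)
    {π : S → ℝ}
    (hπ0 : ∀ i, 0 ≤ π i) (hπs : ∀ j, ∑ i, π i * P i j = π j)
    (D : Finset S) (hD : ∀ i ∈ D, ∀ j ∉ D, π i * P i j = 0) :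
    ∀ i ∉ D, ∀ j ∈ D, π i * P i j = 0 := by
  have key : ∑ i ∈ Dᶜ, ∑ j ∈ D, π i * P i j = 0 := by
    have h1 : ∑ j ∈ D, π j = ∑ j ∈ D, ∑ i, π i * P i j := by
      simp_rw [hπs]
    have h2 : ∑ j ∈ D, ∑ i, π i * P i j
        = ∑ i ∈ D, ∑ j ∈ D, π i * P i j + ∑ i ∈ Dᶜ, ∑ j ∈ D, π i * P i j := by
      rw [Finset.sum_comm]
      exact (Finset.sum_add_sum_compl D _).symm
    have h3 : ∑ i ∈ D, ∑ j ∈ D, π i * P i j = ∑ i ∈ D, π i := by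
      refine Finset.sum_congr rfl fun i hi => ?_
      have hall : ∑ j ∈ D, π i * P i j + ∑ j ∈ Dᶜ, π i * P i j = π i := by
        rw [Finset.sum_add_sum_compl D, ← Finset.mul_sum, hP2, mul_one]
      have hz : ∑ j ∈ Dᶜ, π i * P i j = 0 :=
        Finset.sum_eq_zero fun j hj => hD i hi j (Finset.mem_compl.mp hj)
      linarith
    have h4 := h1.trans h2
    rw [h3] at h4
    linarith
  intro i hi j hj
  have hterm : ∀ i ∈ Dᶜ, 0 ≤ ∑ j ∈ D, π i * P i j :=
    fun i _ => Finset.sum_nonneg fun j _ => mul_nonneg (hπ0 i) (hP1 i j)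
  have h0 : ∑ j ∈ D, π i * P i j = 0 :=
    (Finset.sum_eq_zero_iff_of_nonneg hterm).mp key i (Finset.mem_compl.mpr hi)
  exact (Finset.sum_eq_zero_iff_of_nonneg
    (fun j _ => mul_nonneg (hπ0 i) (hP1 i j))).mp h0 j hj

/-- Restricting a stationary distribution to a set out of which no mass flows and
renormalizing yields a stationary distribution. -/
lemma aux_restrict_stat {P : Matrix S S ℝ} (hP : RowStochastic P) {π : S → ℝ}
    (hπ : StationaryDist P π)
    (D : Finset S) (hD : ∀ i ∈ D, ∀ j ∉ D, π i * P i j = 0)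
    (hm : 0 < ∑ i ∈ D, π i) :
    StationaryDist P (fun i => if i ∈ D then π i / (∑ i ∈ D, π i) else 0) := by
  obtain ⟨hπ0, hπ1, hπs⟩ := hπ
  set m := ∑ i ∈ D, π i with hmdef
  have hflux := aux_flux_zero hP.1 hP.2 hπ0 hπs D hD
  refine ⟨fun i => ?_, ?_, fun j => ?_⟩
  · dsimp only; split
    · exact div_nonneg (hπ0 i) hm.le
    · exact le_refl 0
  · rw [Finset.sum_ite_mem, Finset.univ_inter, ← Finset.sum_div, div_self hm.ne']
  · dsimp only
    have hsum : ∑ i, (if i ∈ D then π i / m else 0) * P i j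
        = (∑ i ∈ D, π i * P i j) / m := by
      have h : ∀ i, (if i ∈ D then π i / m else 0) * P i j
          = if i ∈ D then π i * P i j / m else 0 := fun i => by
        split <;> simp [div_mul_eq_mul_div]
      simp_rw [h, Finset.sum_ite_mem, Finset.univ_inter, ← Finset.sum_div]
    rw [hsum]
    by_cases hj : j ∈ D
    · have hDj : ∑ i ∈ D, π i * P i j = π j := by
        have h1 : ∑ i ∈ D, π i * P i j + ∑ i ∈ Dᶜ, π i * P i j = π j := by
          rw [Finset.sum_add_sum_compl]; exact hπs j
        have h2 : ∑ i ∈ Dᶜ, π i * P i j = 0 :=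
          Finset.sum_eq_zero fun i hi => hflux i (Finset.mem_compl.mp hi) j hj
        linarith
      rw [hDj, if_pos hj]
    · have hDj : ∑ i ∈ D, π i * P i j = 0 :=
        Finset.sum_eq_zero fun i hi => hD i hi j hj
      rw [hDj, if_neg hj, zero_div]

/-- Existence of a stationary distribution, via the singularity of `Pᵀ - 1`. -/
lemma aux_exists_stationary [Nonempty S] {P : Matrix S S ℝ}
    (hP1 : ∀ i j, 0 ≤ P i j) (hP2 : ∀ i, ∑ j, P i j = 1) :
    ∃ π : S → ℝ, StationaryDist P π := by
  have hdet : (P - 1).det = 0 := by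
    rw [← Matrix.exists_mulVec_eq_zero_iff]
    refine ⟨fun _ => 1, fun h => one_ne_zero (congrFun h (Classical.arbitrary S)), ?_⟩
    funext i
    simp only [Matrix.mulVec, dotProduct, Matrix.sub_apply, mul_one, Pi.zero_apply]
    rw [Finset.sum_sub_distrib, hP2 i]
    simp [Matrix.one_apply]
  have hdetT : ((P - 1)ᵀ).det = 0 := by rw [Matrix.det_transpose]; exact hdet
  obtain ⟨w, hw0, hww⟩ := Matrix.exists_mulVec_eq_zero_iff.mpr hdetT
  have hstat : ∀ j, ∑ i, w i * P i j = w j := by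
    intro j
    have h := congrFun hww j
    simp only [Matrix.mulVec, dotProduct, Matrix.transpose_apply, Matrix.sub_apply,
      Pi.zero_apply, sub_mul] at h
    rw [Finset.sum_sub_distrib] at h
    have h1 : ∑ i, (1 : Matrix S S ℝ) i j * w i = w j := by
      simp [Matrix.one_apply, ite_mul]
    rw [h1] at h
    have h2 : ∑ i, w i * P i j = ∑ i, P i j * w i :=
      Finset.sum_congr rfl fun i _ => mul_comm _ _
    linarith
  set u : S → ℝ := fun i => |w i| with hu
  have hsub : ∀ j, u j ≤ ∑ i, u i * P i j := by
    intro j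
    calc u j = |∑ i, w i * P i j| := by rw [hstat j]
      _ ≤ ∑ i, |w i * P i j| := Finset.abs_sum_le_sum_abs _ _
      _ = ∑ i, u i * P i j := by
          refine Finset.sum_congr rfl fun i _ => ?_
          rw [abs_mul, abs_of_nonneg (hP1 i j)]
  have hsums : ∑ j, ∑ i, u i * P i j = ∑ j, u j := by
    rw [Finset.sum_comm]
    refine Finset.sum_congr rfl fun i _ => ?_
    rw [← Finset.mul_sum, hP2 i, mul_one]
  have heq : ∀ j, ∑ i, u i * P i j = u j := by
    intro j
    by_contra hne
    have hlt : u j < ∑ i, u i * P i j := lt_of_le_of_ne (hsub j) (Ne.symm hne)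
    have hlt2 : ∑ j, u j < ∑ j, ∑ i, u i * P i j :=
      Finset.sum_lt_sum (fun j _ => hsub j) ⟨j, Finset.mem_univ j, hlt⟩
    rw [hsums] at hlt2
    exact lt_irrefl _ hlt2
  have hupos : 0 < ∑ i, u i := by
    obtain ⟨i, hi⟩ : ∃ i, w i ≠ 0 := by
      by_contra hc
      push_neg at hc
      exact hw0 (funext fun i => hc i)
    have hipos : 0 < u i := abs_pos.mpr hi
    refine lt_of_lt_of_le hipos ?_
    exact Finset.single_le_sum (fun l _ => abs_nonneg (w l)) (Finset.mem_univ i)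
  refine ⟨fun i => u i / ∑ l, u l, fun i => div_nonneg (abs_nonneg _) hupos.le, ?_, fun j => ?_⟩
  · rw [← Finset.sum_div, div_self hupos.ne']
  · simp_rw [div_mul_eq_mul_div, ← Finset.sum_div, heq j]

/-- A nonnegative invariant vector supported in a closed class with positive total mass
is positive everywhere on the class. -/
lemma aux_pos_on_class {P : Matrix S S ℝ} (hP1 : ∀ i j, 0 ≤ P i j)
    {C : Set S} (hC : ClosedClass P C) {τ : S → ℝ}
    (hτ0 : ∀ i, 0 ≤ τ i) (hτs : ∀ j, ∑ i, τ i * P i j = τ j)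
    (hsupp : ∀ i, 0 < τ i → i ∈ C) (hsum : 0 < ∑ i, τ i) :
    ∀ j ∈ C, 0 < τ j := by
  obtain ⟨i, hi⟩ : ∃ i, 0 < τ i := by
    by_contra hc
    push_neg at hc
    have hz : ∑ i, τ i = 0 := le_antisymm (Finset.sum_nonpos fun i _ => hc i)
      (Finset.sum_nonneg fun i _ => hτ0 i)
    rw [hz] at hsum; exact lt_irrefl _ hsum
  intro j hj
  obtain ⟨k, _, hk⟩ := hC.2.2 i (hsupp i hi) j hj
  have h1 : 0 < τ i * (P ^ k) i j := mul_pos hi hk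
  calc (0:ℝ) < τ i * (P ^ k) i j := h1
    _ ≤ ∑ l, τ l * (P ^ k) l j :=
        Finset.single_le_sum (fun l _ => mul_nonneg (hτ0 l) (aux_pow_apply_nonneg hP1 k l j))
          (Finset.mem_univ i)
    _ = τ j := aux_invariant_pow hτs k j

/-- Uniqueness of the stationary distribution supported in a given closed class. -/
lemma aux_unique_on_class {P : Matrix S S ℝ} (hP1 : ∀ i j, 0 ≤ P i j)
    {C : Set S} (hC : ClosedClass P C) {σ ρ : S → ℝ}
    (hσ : StationaryDist P σ) (hρ : StationaryDist P ρ)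
    (hσC : ∀ i, 0 < σ i → i ∈ C) (hρC : ∀ i, 0 < ρ i → i ∈ C) :
    σ = ρ := by
  classical
  obtain ⟨hσ0, hσ1, hσs⟩ := hσ
  obtain ⟨hρ0, hρ1, hρs⟩ := hρ
  have hρpos : ∀ j ∈ C, 0 < ρ j :=
    aux_pos_on_class hP1 hC hρ0 hρs hρC (by rw [hρ1]; norm_num)
  set F : Finset S := Finset.univ.filter (fun i => i ∈ C) with hF
  have hFne : F.Nonempty := by
    obtain ⟨i, hi⟩ := hC.1
    exact ⟨i, by simp [hF, hi]⟩
  obtain ⟨i₀, hi₀F, hmin⟩ := F.exists_min_image (fun i => σ i / ρ i) hFne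
  have hi₀C : i₀ ∈ C := by simpa [hF] using hi₀F
  set c : ℝ := σ i₀ / ρ i₀ with hc
  have hc0 : 0 ≤ c := div_nonneg (hσ0 i₀) (hρ0 i₀)
  set τ : S → ℝ := fun i => σ i - c * ρ i with hτ
  have hτ0 : ∀ i, 0 ≤ τ i := by
    intro i
    by_cases hiC : i ∈ C
    · have hρi : 0 < ρ i := hρpos i hiC
      have hle : c * ρ i ≤ σ i := by
        rw [hc]
        calc σ i₀ / ρ i₀ * ρ i ≤ σ i / ρ i * ρ i := by
              apply mul_le_mul_of_nonneg_right (hmin i (by simp [hF, hiC])) (hρ0 i)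
          _ = σ i := div_mul_cancel₀ _ hρi.ne'
      simp [hτ]; linarith
    · have h1 : σ i = 0 := by
        rcases lt_or_eq_of_le (hσ0 i) with h | h
        · exact absurd (hσC i h) hiC
        · exact h.symm
      have h2 : ρ i = 0 := by
        rcases lt_or_eq_of_le (hρ0 i) with h | h
        · exact absurd (hρC i h) hiC
        · exact h.symm
      simp [hτ, h1, h2]
  have hτs : ∀ j, ∑ i, τ i * P i j = τ j := by
    intro j
    simp only [hτ, sub_mul, mul_assoc]
    rw [Finset.sum_sub_distrib, hσs j, ← Finset.mul_sum, hρs j]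
  have hτi₀ : τ i₀ = 0 := by
    have hρi₀ : ρ i₀ ≠ 0 := (hρpos i₀ hi₀C).ne'
    simp [hτ, hc, div_mul_cancel₀ _ hρi₀]
  have hτsupp : ∀ i, 0 < τ i → i ∈ C := by
    intro i hi
    by_contra hiC
    have h1 : σ i = 0 := by
      rcases lt_or_eq_of_le (hσ0 i) with h | h
      · exact absurd (hσC i h) hiC
      · exact h.symm
    have h2 : ρ i = 0 := by
      rcases lt_or_eq_of_le (hρ0 i) with h | h
      · exact absurd (hρC i h) hiC
      · exact h.symm
    simp [hτ, h1, h2] at hi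
  have hτzero : ∀ i, τ i = 0 := by
    by_contra hc2
    push_neg at hc2
    obtain ⟨i, hi⟩ := hc2
    have hipos : 0 < τ i := lt_of_le_of_ne (hτ0 i) (Ne.symm hi)
    have hsum : 0 < ∑ i, τ i :=
      lt_of_lt_of_le hipos (Finset.single_le_sum (fun l _ => hτ0 l) (Finset.mem_univ i))
    have hpos := aux_pos_on_class hP1 hC hτ0 hτs hτsupp hsum i₀ hi₀C
    rw [hτi₀] at hpos; exact lt_irrefl _ hpos
  have hc1 : c = 1 := by
    have h1 : ∑ i, σ i = ∑ i, c * ρ i := by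
      refine Finset.sum_congr rfl fun i _ => ?_
      have hz := hτzero i
      simp [hτ] at hz
      linarith
    rw [hσ1, ← Finset.mul_sum, hρ1, mul_one] at h1
    exact h1.symm
  funext i
  have hz := hτzero i
  simp [hτ, hc1] at hz
  linarith

/-- An extreme point of the stationary polytope puts full mass on any set with
positive mass out of which no mass flows. -/
lemma aux_full_mass {P : Matrix S S ℝ} (hP : RowStochastic P) {π : S → ℝ}
    (hπ : StationaryDist P π)
    (hext : ∀ y, StationaryDist P y → ∀ z, StationaryDist P z →
      π ∈ openSegment ℝ y z → y = π ∧ z = π)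
    (D : Finset S) (hD : ∀ i ∈ D, ∀ j ∉ D, π i * P i j = 0)
    (hm : 0 < ∑ i ∈ D, π i) :
    ∀ j ∉ D, π j = 0 := by
  obtain ⟨hπ0, hπ1, hπs⟩ := hπ
  set m := ∑ i ∈ D, π i with hmdef
  have hsplit : m + ∑ i ∈ Dᶜ, π i = 1 := by
    rw [hmdef, Finset.sum_add_sum_compl]; exact hπ1
  have hm1 : m ≤ 1 := by
    have h0 : 0 ≤ ∑ i ∈ Dᶜ, π i := Finset.sum_nonneg fun i _ => hπ0 i
    linarith
  have hmeq : m = 1 := by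
    by_contra hne
    have hmlt : m < 1 := lt_of_le_of_ne hm1 hne
    have hmc : 0 < ∑ i ∈ Dᶜ, π i := by linarith
    have hDc : ∀ i ∈ Dᶜ, ∀ j ∉ Dᶜ, π i * P i j = 0 := by
      intro i hi j hj
      exact aux_flux_zero hP.1 hP.2 hπ0 hπs D hD i (Finset.mem_compl.mp hi) j
        (by simpa using hj)
    have hπ₁ := aux_restrict_stat hP ⟨hπ0, hπ1, hπs⟩ D hD hm
    have hπ₂ := aux_restrict_stat hP ⟨hπ0, hπ1, hπs⟩ Dᶜ hDc hmc
    set π₁ : S → ℝ := fun i => if i ∈ D then π i / m else 0 with hπ₁def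
    set π₂ : S → ℝ := fun i => if i ∈ Dᶜ then π i / (∑ i ∈ Dᶜ, π i) else 0 with hπ₂def
    have hseg : π ∈ openSegment ℝ π₁ π₂ := by
      refine ⟨m, 1 - m, hm, by linarith, by ring, funext fun i => ?_⟩
      simp only [Pi.add_apply, Pi.smul_apply, smul_eq_mul, hπ₁def, hπ₂def,
        Finset.mem_compl]
      by_cases hi : i ∈ D
      · rw [if_pos hi, if_neg (by simpa using hi), mul_div_cancel₀ _ hm.ne', mul_zero,
          add_zero]
      · rw [if_neg hi, if_pos hi, mul_zero, zero_add]
        have h1m : ∑ i ∈ Dᶜ, π i = 1 - m := by linarith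
        rw [h1m, mul_div_cancel₀ _ (by linarith : (1:ℝ) - m ≠ 0)]
    obtain ⟨heq1, _⟩ := hext π₁ hπ₁ π₂ hπ₂ hseg
    obtain ⟨j, hjDc, hjpos⟩ : ∃ j ∈ Dᶜ, 0 < π j := by
      by_contra hc
      push_neg at hc
      have hle : ∑ i ∈ Dᶜ, π i ≤ 0 := Finset.sum_nonpos fun i hi => hc i hi
      linarith
    have hj0 := congrFun heq1 j
    rw [hπ₁def] at hj0
    simp only [if_neg (Finset.mem_compl.mp hjDc)] at hj0
    linarith [hj0 ▸ hjpos]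
  intro j hj
  have hzero : ∑ i ∈ Dᶜ, π i = 0 := by linarith
  exact (Finset.sum_eq_zero_iff_of_nonneg (fun i _ => hπ0 i)).mp hzero j
    (Finset.mem_compl.mpr hj)

end Aux

/-- The set of stationary distributions of a row-stochastic matrix is a nonempty
convex set, and a stationary distribution is an extreme point of this set iff its
support is contained in a single closed communicating class. -/
theorem stationary_polytope_extreme_points
    {S : Type*} [Fintype S] [DecidableEq S] [Nonempty S]
    (P : Matrix S S ℝ) (hP : RowStochastic P) :
    ({π : S → ℝ | StationaryDist P π}).Nonempty ∧
    Convex ℝ {π : S → ℝ | StationaryDist P π} ∧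
    ∀ π : S → ℝ, StationaryDist P π →
      (π ∈ Set.extremePoints ℝ {π' : S → ℝ | StationaryDist P π'} ↔
        ∃ C : Set S, ClosedClass P C ∧ ∀ i, 0 < π i → i ∈ C) := by
  classical
  refine ⟨aux_exists_stationary hP.1 hP.2, ?_, ?_⟩
  · -- convexity
    intro x hx y hy a b ha hb hab
    obtain ⟨hx0, hx1, hxs⟩ := hx
    obtain ⟨hy0, hy1, hys⟩ := hy
    refine ⟨fun i => ?_, ?_, fun j => ?_⟩
    · simpa using add_nonneg (mul_nonneg ha (hx0 i)) (mul_nonneg hb (hy0 i))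
    · simp only [Pi.add_apply, Pi.smul_apply, smul_eq_mul]
      rw [Finset.sum_add_distrib, ← Finset.mul_sum, ← Finset.mul_sum, hx1, hy1]
      simpa using hab
    · simp only [Pi.add_apply, Pi.smul_apply, smul_eq_mul, add_mul, mul_assoc]
      rw [Finset.sum_add_distrib, ← Finset.mul_sum, ← Finset.mul_sum, hxs j, hys j]
  · intro π hπ
    constructor
    · -- extreme ⇒ support in a closed class, namely the support itself
      intro hext
      rw [mem_extremePoints] at hext
      obtain ⟨hπmem, hextr⟩ := hext
      have hext' : ∀ y, StationaryDist P y → ∀ z, StationaryDist P z →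
          π ∈ openSegment ℝ y z → y = π ∧ z = π :=
        fun y hy z hz hseg => hextr y hy z hz hseg
      obtain ⟨hπ0, hπ1, hπs⟩ := hπ
      have hsupp_closed : ∀ i, 0 < π i → ∀ j, ¬ 0 < π j → P i j = 0 := by
        intro i hi j hj
        by_contra hne
        have hPij : 0 < P i j := lt_of_le_of_ne (hP.1 i j) (Ne.symm hne)
        have hπj : 0 < π j := by
          calc (0:ℝ) < π i * P i j := mul_pos hi hPij
            _ ≤ ∑ l, π l * P l j :=
                Finset.single_le_sum (fun l _ => mul_nonneg (hπ0 l) (hP.1 l j))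
                  (Finset.mem_univ i)
            _ = π j := hπs j
        exact hj hπj
      refine ⟨{i | 0 < π i}, ⟨?_, ?_, ?_⟩, fun i hi => hi⟩
      · -- nonempty
        by_contra hc
        rw [Set.not_nonempty_iff_eq_empty, Set.eq_empty_iff_forall_notMem] at hc
        have hz : ∑ i, π i ≤ 0 := Finset.sum_nonpos fun i _ =>
          le_of_not_gt (hc i)
        rw [hπ1] at hz; linarith
      · -- closed
        intro i hi j hj
        exact hsupp_closed i hi j hj
      · -- communicating
        intro i hi j hj
        have hi' : 0 < π i := hi
        have hj' : 0 < π j := hj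
        set D : Finset S := Finset.univ.filter (fun l => ∃ k, 0 < (P ^ k) i l) with hDdef
        have hDmem : ∀ l, l ∈ D ↔ ∃ k, 0 < (P ^ k) i l := by
          intro l; simp [hDdef]
        have hDclosed : ∀ l ∈ D, ∀ j' ∉ D, π l * P l j' = 0 := by
          intro l hl j' hj'
          obtain ⟨k, hk⟩ := (hDmem l).mp hl
          have hPlj : P l j' = 0 := by
            by_contra hne
            exact hj' ((hDmem j').mpr
              ⟨k + 1, aux_pow_mul_pos hP.1 hk (lt_of_le_of_ne (hP.1 l j') (Ne.symm hne))⟩)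
          rw [hPlj, mul_zero]
        have hiD : i ∈ D := (hDmem i).mpr ⟨0, by simp [Matrix.one_apply]⟩
        have hmass : 0 < ∑ l ∈ D, π l :=
          lt_of_lt_of_le hi' (Finset.single_le_sum (fun l _ => hπ0 l) hiD)
        have hfull := aux_full_mass hP ⟨hπ0, hπ1, hπs⟩ hext' D hDclosed hmass
        have hsubD : ∀ l, 0 < π l → l ∈ D := by
          intro l hl
          by_contra hlD
          rw [hfull l hlD] at hl; exact lt_irrefl _ hl
        obtain ⟨k, hk⟩ := (hDmem j).mp (hsubD j hj')
        rcases Nat.eq_zero_or_pos k with hk0 | hk1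
        · -- k = 0 forces i = j; find a loop through a π-positive predecessor of i
          subst hk0
          have hij : i = j := by
            by_contra hne
            rw [pow_zero, Matrix.one_apply, if_neg hne] at hk
            exact lt_irrefl _ hk
          subst hij
          obtain ⟨l, hl⟩ : ∃ l, 0 < π l * P l i := by
            by_contra hc
            push_neg at hc
            have hle : ∑ l, π l * P l i ≤ 0 := Finset.sum_nonpos fun l _ => hc l
            rw [hπs i] at hle; linarith
          have hπl : 0 < π l := by
            rcases mul_pos_iff.mp hl with ⟨h1, _⟩ | ⟨h1, h2⟩
            · exact h1
            · exact absurd h2 (not_lt.mpr (hP.1 l i))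
          have hPli : 0 < P l i := by
            rcases mul_pos_iff.mp hl with ⟨_, h2⟩ | ⟨h1, _⟩
            · exact h2
            · exact absurd h1 (not_lt.mpr (hπ0 l))
          obtain ⟨k', hk'⟩ := (hDmem l).mp (hsubD l hπl)
          exact ⟨k' + 1, Nat.le_add_left 1 k', aux_pow_mul_pos hP.1 hk' hPli⟩
        · exact ⟨k, hk1, hk⟩
    · -- support in a closed class ⇒ extreme
      rintro ⟨C, hC, hsupp⟩
      rw [mem_extremePoints]
      refine ⟨hπ, fun y hy z hz hseg => ?_⟩
      obtain ⟨a, b, ha, hb, hab, heq⟩ := hseg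
      have hy' : StationaryDist P y := hy
      have hz' : StationaryDist P z := hz
      have hval : ∀ i, a * y i + b * z i = π i := fun i => by
        have h := congrFun heq i
        simpa using h
      have hyC : ∀ i, 0 < y i → i ∈ C := by
        intro i hyi
        refine hsupp i ?_
        have h1 : 0 < a * y i := mul_pos ha hyi
        have h2 : 0 ≤ b * z i := mul_nonneg hb.le (hz'.1 i)
        linarith [hval i]
      have hzC : ∀ i, 0 < z i → i ∈ C := by
        intro i hzi
        refine hsupp i ?_
        have h1 : 0 < b * z i := mul_pos hb hzi
        have h2 : 0 ≤ a * y i := mul_nonneg ha.le (hy'.1 i)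
        linarith [hval i]
      exact ⟨aux_unique_on_class hP.1 hC hy' hπ hyC hsupp,
        aux_unique_on_class hP.1 hC hz' hπ hzC hsupp⟩
end
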